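/- Let $A$ be a reduced Noetherian ring, $\mathfrak{p} \subset A$ a minimal prime ideal, $R$ a local Artinian algebra over a field $k$ with residue field $k$, and $\mathfrak{P} \subseteq A \otimes_k R$ an ideal such that $(A \otimes_k R)/\mathfrak{P}$ is flat over $R$ and $\mathfrak{P} + \mathfrak{m}(A\otimes_k R) = \mathfrak{p}\otimes_k R + \mathfrak{m}(A\otimes_k R)$ (i.e. $(A\otimes_k R)/\mathfrak{P}$ is a flat deformation of $A/\mathfrak{p}$ over $R$). Then $\mathfrak{P} = \mathfrak{p} \otimes_k R$. -/

import Mathlib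

set_option maxHeartbeats 2000000
set_option synthInstance.maxHeartbeats 400000

open TensorProduct


open TensorProduct

section SmulMap

variable {R : Type*} [CommRing R] {M : Type*} [AddCommGroup M] [Module R M]

noncomputable def smulMap (I : Ideal R) (M : Type*) [AddCommGroup M] [Module R M] :
    I ⊗[R] M →ₗ[R] M :=
  TensorProduct.lift ((LinearMap.lsmul R M).comp I.subtype)

@[simp] lemma smulMap_tmul (I : Ideal R) (i : I) (m : M) :
    smulMap I M (i ⊗ₜ m) = (i : R) • m := rfl

lemma smulMap_eq (I : Ideal R) :
    smulMap I M = (TensorProduct.lid R M).toLinearMap.comp (LinearMap.rTensor M I.subtype) := by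
  apply TensorProduct.ext'
  intro i m
  simp

lemma smulMap_injective (I : Ideal R) [Module.Flat R M] :
    Function.Injective (smulMap I M) := by
  rw [smulMap_eq]
  have h := (Module.Flat.iff_rTensor_injective' (R := R) (M := M)).mp inferInstance I
  simpa [LinearMap.coe_comp] using (TensorProduct.lid R M).injective.comp h

lemma smulMap_naturality {N : Type*} [AddCommGroup N] [Module R N] (I : Ideal R)
    (f : M →ₗ[R] N) :
    (smulMap I N).comp (LinearMap.lTensor I f) = f.comp (smulMap I M) := by
  apply TensorProduct.ext'
  intro i m
  simp

lemma exists_smulMap_eq (I : Ideal R) {z : M} (hz : z ∈ I • (⊤ : Submodule R M)) :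
    ∃ t, smulMap I M t = z := by
  refine Submodule.smul_induction_on hz (fun r hr m _ => ⟨⟨r, hr⟩ ⊗ₜ m, by simp⟩) ?_
  rintro x y ⟨t, rfl⟩ ⟨t', rfl⟩
  exact ⟨t + t', by simp⟩

lemma mem_range_smulMap (I : Ideal R) (S : Submodule R M) {z : M} (hz : z ∈ I • S) :
    ∃ t ∈ LinearMap.range (LinearMap.lTensor I S.subtype), smulMap I M t = z := by
  refine Submodule.smul_induction_on hz ?_ ?_
  · intro r hr m hm
    exact ⟨LinearMap.lTensor I S.subtype ((⟨r, hr⟩ : I) ⊗ₜ (⟨m, hm⟩ : S)),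
      LinearMap.mem_range_self _ _, by simp⟩
  · rintro x y ⟨t, ht, rfl⟩ ⟨t', ht', rfl⟩
    exact ⟨t + t', add_mem ht ht', by simp⟩

lemma smulMap_range_le (I : Ideal R) (S : Submodule R M) (t : I ⊗[R] S) :
    smulMap I M (LinearMap.lTensor I S.subtype t) ∈ I • S := by
  induction t with
  | zero => simp
  | tmul i s => simpa using Submodule.smul_mem_smul i.2 s.2
  | add x y hx hy => rw [map_add, map_add]; exact add_mem hx hy

/-- If `N = M/ker π` is flat, then `(ker π) ∩ I•M = I•(ker π)`. -/
lemma flat_inter_smul {N : Type*} [AddCommGroup N] [Module R N] [Module.Flat R N]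
    (π : M →ₗ[R] N) (hπ : Function.Surjective π) (I : Ideal R) {m : M}
    (hm : m ∈ LinearMap.ker π) (hm' : m ∈ I • (⊤ : Submodule R M)) :
    m ∈ I • (LinearMap.ker π) := by
  obtain ⟨t, ht⟩ := exists_smulMap_eq I hm'
  have hex := lTensor_exact I (LinearMap.exact_subtype_ker_map π) hπ
  have h0 : smulMap I N (LinearMap.lTensor I π t) = 0 := by
    have hnat := LinearMap.congr_fun (smulMap_naturality I π) t
    simp only [LinearMap.comp_apply] at hnat
    rw [hnat, ht]
    exact hm
  have hz : LinearMap.lTensor I π t = 0 := smulMap_injective I (by rw [h0, map_zero])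
  obtain ⟨t', ht'⟩ := (hex t).mp hz
  rw [← ht, ← ht']
  exact smulMap_range_le I _ t'

/-- Core graded-piece lemma. -/
lemma step_lemma (I J : Ideal R) [J.IsMaximal] [Module.Flat R M]
    (u : M →ₗ[R] M)
    (hu : ∀ z : M, u z ∈ J • (⊤ : Submodule R M) → z ∈ J • (⊤ : Submodule R M))
    {z : M} (hz : z ∈ I • (⊤ : Submodule R M))
    (huz : u z ∈ I • (J • (⊤ : Submodule R M))) :
    z ∈ I • (J • (⊤ : Submodule R M)) := by
  set S : Submodule R M := J • (⊤ : Submodule R M) with hS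
  obtain ⟨t, ht⟩ := exists_smulMap_eq I hz
  obtain ⟨t₂, ht₂mem, ht₂⟩ := mem_range_smulMap I S huz
  have h1 : smulMap I M (LinearMap.lTensor I u t) = u z := by
    have hnat := LinearMap.congr_fun (smulMap_naturality I u) t
    simp only [LinearMap.comp_apply] at hnat
    rw [hnat, ht]
  have heq : LinearMap.lTensor I u t = t₂ := smulMap_injective I (by rw [h1, ht₂])
  -- the induced map on M / J•⊤
  have hle : S ≤ S.comap u := by
    intro x hx
    refine Submodule.smul_induction_on hx (fun j hj m _ => ?_) (fun a b ha hb => ?_)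
    · show u (j • m) ∈ S
      rw [map_smul]
      exact Submodule.smul_mem_smul hj trivial
    · show u (a + b) ∈ S
      rw [map_add]; exact add_mem ha hb
  set ubar : (M ⧸ S) →ₗ[R] (M ⧸ S) := Submodule.mapQ S S u hle with hubar
  have hcommpt : ∀ x : M, ubar (Submodule.Quotient.mk x) = Submodule.Quotient.mk (u x) :=
    fun x => rfl
  have hubar_inj : Function.Injective ubar := by
    rw [← LinearMap.ker_eq_bot, eq_bot_iff]
    intro w hw
    obtain ⟨x, rfl⟩ := Submodule.Quotient.mk_surjective S w
    rw [LinearMap.mem_ker, hcommpt, Submodule.Quotient.mk_eq_zero] at hw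
    simpa [Submodule.mem_bot, Submodule.Quotient.mk_eq_zero] using hu x hw
  -- upgrade to (R ⧸ J)-linearity
  letI : Field (R ⧸ J) := Ideal.Quotient.field J
  set W := M ⧸ (J • (⊤ : Submodule R M)) with hW
  let ubar' : W →ₗ[R ⧸ J] W :=
    { toFun := ubar
      map_add' := map_add ubar
      map_smul' := by
        intro c w
        obtain ⟨b, rfl⟩ := Ideal.Quotient.mk_surjective c
        have h1 : (Ideal.Quotient.mk J b) • w = b • w :=
          Module.IsTorsionBySet.mk_smul (Module.isTorsionBySet_quotient_ideal_smul M J) b w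
        have h2 : (Ideal.Quotient.mk J b) • (ubar w) = b • (ubar w) :=
          Module.IsTorsionBySet.mk_smul (Module.isTorsionBySet_quotient_ideal_smul M J) b _
        show ubar ((Ideal.Quotient.mk J b) • w) = (Ideal.Quotient.mk J b) • (ubar w)
        rw [h1, h2]
        exact map_smul ubar b w }
  obtain ⟨g, hg⟩ := LinearMap.exists_leftInverse_of_injective ubar'
    (by rw [LinearMap.ker_eq_bot]; exact hubar_inj)
  let gR : W →ₗ[R] W :=
    { toFun := g
      map_add' := map_add g
      map_smul' := by
        intro r w
        have h1 : (r : R) • w = (Ideal.Quotient.mk J r) • w :=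
          (Module.IsTorsionBySet.mk_smul (Module.isTorsionBySet_quotient_ideal_smul M J) r w).symm
        have h2 : (Ideal.Quotient.mk J r) • (g w : W) = (r : R) • (g w : W) :=
          Module.IsTorsionBySet.mk_smul (Module.isTorsionBySet_quotient_ideal_smul M J) r _
        show g ((r : R) • w) = (r : R) • g w
        rw [h1, map_smul, h2] }
  have hcomp : gR.comp ubar = LinearMap.id := by
    apply LinearMap.ext
    intro w
    exact LinearMap.congr_fun hg w
  have hinj : Function.Injective (LinearMap.lTensor I ubar) :=
    Function.LeftInverse.injective (g := LinearMap.lTensor I gR) (fun t => by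
      rw [← LinearMap.comp_apply, ← LinearMap.lTensor_comp, hcomp, LinearMap.lTensor_id,
        LinearMap.id_apply])
  -- naturality of the quotient map
  have hcomm : (S.mkQ).comp u = ubar.comp S.mkQ := by
    ext x
    simp [hcommpt x]
  have hΦt₂ : LinearMap.lTensor I S.mkQ t₂ = 0 := by
    obtain ⟨t₂', rfl⟩ := ht₂mem
    rw [← LinearMap.comp_apply, ← LinearMap.lTensor_comp]
    have : (S.mkQ).comp S.subtype = 0 := by
      ext x; simp
    rw [this]
    simp
  have hΦt : LinearMap.lTensor I S.mkQ t = 0 := by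
    apply hinj
    rw [map_zero, ← LinearMap.comp_apply, ← LinearMap.lTensor_comp, ← hcomm,
      LinearMap.lTensor_comp, LinearMap.comp_apply, heq, hΦt₂]
  have hex := lTensor_exact I (LinearMap.exact_subtype_mkQ S) (Submodule.mkQ_surjective S)
  obtain ⟨t', ht'⟩ := (hex t).mp hΦt
  rw [← ht, ← ht']
  exact smulMap_range_le I _ t'

lemma injective_of_injective_mod (J : Ideal R) [J.IsMaximal] [Module.Flat R M]
    (hJ : IsNilpotent J) (u : M →ₗ[R] M)
    (hu : ∀ z : M, u z ∈ J • (⊤ : Submodule R M) → z ∈ J • (⊤ : Submodule R M)) :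
    Function.Injective u := by
  obtain ⟨n, hn⟩ := hJ
  have key : ∀ (j : ℕ) (z : M), u z = 0 → z ∈ J ^ j • (⊤ : Submodule R M) := by
    intro j
    induction j with
    | zero => intro z _; simp
    | succ j ih =>
      intro z hz
      have h1 : z ∈ J ^ j • (⊤ : Submodule R M) := ih z hz
      have h2 : u z ∈ (J ^ j) • (J • (⊤ : Submodule R M)) := by
        rw [hz]; exact zero_mem _
      have h3 := step_lemma (J ^ j) J u hu h1 h2
      rwa [pow_succ, ← Ideal.smul_eq_mul, Submodule.smul_assoc]
  intro a b hab
  have h0 : u (a - b) = 0 := by rw [map_sub, hab, sub_self]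
  have h4 := key n (a - b) h0
  rw [hn, Ideal.zero_eq_bot, Submodule.bot_smul, Submodule.mem_bot] at h4
  exact sub_eq_zero.mp h4

end SmulMap


lemma exists_annihilator_of_mem_minimalPrimes {A : Type*} [CommRing A] [IsReduced A]
    {p : Ideal A} (hp : p ∈ minimalPrimes A) {x : A} (hx : x ∈ p) :
    ∃ s, s ∉ p ∧ s * x = 0 := by
  have hprime : p.IsPrime := hp.1.1
  have hone : (1 : A) ∉ p := fun h => hprime.ne_top ((Ideal.eq_top_iff_one p).mpr h)
  let S : Submonoid A :=
    { carrier := {y | ∃ s, s ∉ p ∧ ∃ n : ℕ, y = s * x ^ n}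
      mul_mem' := by
        rintro a b ⟨s, hs, n, rfl⟩ ⟨s', hs', n', rfl⟩
        exact ⟨s * s', fun h => ((hprime.mem_or_mem h).elim hs hs'), n + n', by ring⟩
      one_mem' := ⟨1, hone, 0, by ring⟩ }
  by_cases h0 : (0 : A) ∈ S
  · obtain ⟨s, hs, n, hsn⟩ := h0
    cases n with
    | zero =>
      exfalso
      rw [pow_zero, mul_one] at hsn
      exact hs (hsn ▸ p.zero_mem)
    | succ m =>
      refine ⟨s, hs, ?_⟩
      have hnil : (s * x) ^ (m + 1) = 0 := by
        have : s ^ (m + 1) * x ^ (m + 1) = s ^ m * (s * x ^ (m + 1)) := by ring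
        rw [mul_pow, this, ← hsn, mul_zero]
      exact IsNilpotent.eq_zero ⟨m + 1, hnil⟩
  · exfalso
    have hdisj : Disjoint ((⊥ : Ideal A) : Set A) (S : Set A) := by
      rw [Set.disjoint_left]
      intro y hy hyS
      rw [SetLike.mem_coe, Ideal.mem_bot] at hy
      exact h0 (hy ▸ hyS)
    obtain ⟨q, hq, -, hdq⟩ := Ideal.exists_le_prime_disjoint _ _ hdisj
    have hqp : q ≤ p := by
      intro y hy
      by_contra hyp
      exact (Set.disjoint_left.mp hdq hy) ⟨y, hyp, 0, by ring⟩
    have hpq : p ≤ q := hp.2 ⟨hq, bot_le⟩ hqp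
    exact (Set.disjoint_left.mp hdq (hpq hx)) ⟨1, hone, 1, by ring⟩

/-- **Lemma (uniqueness of flat lifts of minimal primes).** Let `A` be a reduced
Noetherian algebra over a field `k`, `p ⊂ A` a minimal prime, `(R, 𝔪)` a local
Artinian `k`-algebra with residue field `k`, and `P ⊆ A ⊗_k R` an ideal such that
`(A ⊗_k R)/P` is `R`-flat and `P + 𝔪(A ⊗ R) = p⊗R + 𝔪(A ⊗ R)` (so `(A ⊗ R)/P` is a
flat deformation of `A/p`). Then `P = p ⊗_k R`, the extension of `p`.
(We write the base change as `R ⊗[k] A`.) -/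
theorem flat_deformation_of_minimal_prime_unique
    (k : Type*) [Field k]
    (A : Type*) [CommRing A] [Algebra k A] [IsReduced A] [IsNoetherianRing A]
    (p : Ideal A) (hp : p ∈ minimalPrimes A)
    (R : Type*) [CommRing R] [Algebra k R] [IsLocalRing R] [IsArtinianRing R]
    (hres : Function.Bijective (algebraMap k (IsLocalRing.ResidueField R)))
    (P : Ideal (R ⊗[k] A))
    (hflat : Module.Flat R ((R ⊗[k] A) ⧸ P))
    (hfiber : P ⊔ (IsLocalRing.maximalIdeal R).map (algebraMap R (R ⊗[k] A)) =
      p.map (Algebra.TensorProduct.includeRight (R := k) (A := R)).toRingHom ⊔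
        (IsLocalRing.maximalIdeal R).map (algebraMap R (R ⊗[k] A))) :
    P = p.map (Algebra.TensorProduct.includeRight (R := k) (A := R)).toRingHom := by
  classical
  haveI := hflat
  have hprime : p.IsPrime := hp.1.1
  haveI := hprime
  set 𝔪 := IsLocalRing.maximalIdeal R with h𝔪
  set Q : Ideal (R ⊗[k] A) :=
    p.map (Algebra.TensorProduct.includeRight (R := k) (A := R)).toRingHom with hQ
  set MT : Ideal (R ⊗[k] A) := 𝔪.map (algebraMap R (R ⊗[k] A)) with hMT
  -- nilpotency of the maximal ideal
  have hnil : IsNilpotent 𝔪 := by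
    have h := IsArtinianRing.isNilpotent_jacobson_bot (R := R)
    rwa [IsLocalRing.jacobson_eq_maximalIdeal ⊥ bot_ne_top] at h
  -- the residue field equiv
  let e : k ≃+* IsLocalRing.ResidueField R :=
    RingEquiv.ofBijective (algebraMap k (IsLocalRing.ResidueField R)) hres
  have he : ∀ c : k, e c = algebraMap k (IsLocalRing.ResidueField R) c := fun _ => rfl
  have hres_alg : ∀ c : k, IsLocalRing.residue R (algebraMap k R c) =
      algebraMap k (IsLocalRing.ResidueField R) c := fun c => rfl
  -- the fiber map ψ : R ⊗ A → A/p
  let ρ : R →ₐ[k] A ⧸ p :=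
    { toRingHom := (algebraMap k (A ⧸ p)).comp
        (e.symm.toRingHom.comp (IsLocalRing.residue R))
      commutes' := fun c => by
        show algebraMap k (A ⧸ p) (e.symm (IsLocalRing.residue R (algebraMap k R c))) = _
        rw [hres_alg, ← he, RingEquiv.symm_apply_apply] }
  have hρ : ∀ r : R, ρ r = algebraMap k (A ⧸ p) (e.symm (IsLocalRing.residue R r)) :=
    fun _ => rfl
  have hρm : ∀ r ∈ 𝔪, ρ r = 0 := by
    intro r hr
    rw [hρ]
    have : IsLocalRing.residue R r = 0 := Ideal.Quotient.eq_zero_iff_mem.mpr hr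
    rw [this, map_zero, map_zero]
  let ψ : (R ⊗[k] A) →ₐ[k] A ⧸ p :=
    Algebra.TensorProduct.lift ρ (Ideal.Quotient.mkₐ k p) (fun _ _ => Commute.all _ _)
  have hψ_tmul : ∀ (r : R) (a : A), ψ (r ⊗ₜ a) = ρ r * Ideal.Quotient.mk p a := by
    intro r a
    simp [ψ, Algebra.TensorProduct.lift_tmul]
  have hψ_right : ∀ a : A, ψ ((1 : R) ⊗ₜ a) = Ideal.Quotient.mk p a := by
    intro a
    rw [hψ_tmul, map_one, one_mul]
  have hψ_left : ∀ r : R, ψ (algebraMap R (R ⊗[k] A) r) = ρ r := by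
    intro r
    rw [Algebra.TensorProduct.algebraMap_apply, hψ_tmul, map_one, mul_one,
      Algebra.algebraMap_self, RingHom.id_apply]
  -- Q and MT are in the kernel of ψ
  have hQker : Q ≤ RingHom.ker ψ.toRingHom := by
    rw [hQ, Ideal.map_le_iff_le_comap]
    intro x hx
    rw [Ideal.mem_comap, RingHom.mem_ker]
    show ψ ((1:R) ⊗ₜ x) = 0
    rw [hψ_right]
    exact Ideal.Quotient.eq_zero_iff_mem.mpr hx
  have hMTker : MT ≤ RingHom.ker ψ.toRingHom := by
    rw [hMT, Ideal.map_le_iff_le_comap]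
    intro r hr
    rw [Ideal.mem_comap, RingHom.mem_ker]
    show ψ (algebraMap R (R ⊗[k] A) r) = 0
    rw [hψ_left]
    exact hρm r hr
  -- decomposition of a tensor modulo MT
  have hdec : ∀ t : R ⊗[k] A, ∃ a : A, t - (1 : R) ⊗ₜ a ∈ MT := by
    intro t
    induction t with
    | zero => exact ⟨0, by simp⟩
    | tmul r a =>
      refine ⟨(e.symm (IsLocalRing.residue R r)) • a, ?_⟩
      set c := e.symm (IsLocalRing.residue R r) with hc
      have hr : r - algebraMap k R c ∈ 𝔪 := by
        rw [← Ideal.Quotient.eq_zero_iff_mem]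
        show IsLocalRing.residue R _ = 0
        rw [map_sub, hres_alg, ← he, hc, RingEquiv.apply_symm_apply, sub_self]
      have h1 : (1 : R) ⊗ₜ[k] (c • a) = (algebraMap k R c) ⊗ₜ[k] a := by
        rw [TensorProduct.tmul_smul, TensorProduct.smul_tmul', Algebra.algebraMap_eq_smul_one]
      rw [h1, ← TensorProduct.sub_tmul]
      have h2 : (r - algebraMap k R c) ⊗ₜ[k] a
          = algebraMap R (R ⊗[k] A) (r - algebraMap k R c) * ((1:R) ⊗ₜ a) := by
        rw [Algebra.TensorProduct.algebraMap_apply, Algebra.TensorProduct.tmul_mul_tmul,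
          mul_one, one_mul, Algebra.algebraMap_self, RingHom.id_apply]
      rw [h2]
      exact Ideal.mul_mem_right _ _ (Ideal.mem_map_of_mem _ hr)
    | add x y hx hy =>
      obtain ⟨a₁, ha₁⟩ := hx
      obtain ⟨a₂, ha₂⟩ := hy
      refine ⟨a₁ + a₂, ?_⟩
      rw [TensorProduct.tmul_add, add_sub_add_comm]
      exact add_mem ha₁ ha₂
  -- kernel of ψ is exactly Q ⊔ MT = P ⊔ MT
  have hkerQ : ∀ t : R ⊗[k] A, ψ t = 0 ↔ t ∈ Q ⊔ MT := by
    intro t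
    constructor
    · intro ht
      obtain ⟨a, ha⟩ := hdec t
      have h3 : ψ (t - (1:R) ⊗ₜ a) = 0 := hMTker ha
      have hψa : ψ ((1:R) ⊗ₜ a) = 0 := by
        have h4 := map_sub ψ t ((1:R) ⊗ₜ a)
        rw [h3, ht, zero_sub] at h4
        simpa [neg_eq_zero] using h4.symm
      have hap : a ∈ p := Ideal.Quotient.eq_zero_iff_mem.mp (by rw [← hψ_right a]; exact hψa)
      have h1Q : (1:R) ⊗ₜ a ∈ Q := by
        have := Ideal.mem_map_of_mem
          (Algebra.TensorProduct.includeRight (R := k) (A := R)).toRingHom hap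
        exact this
      have hdecomp : t = ((1:R) ⊗ₜ a) + (t - (1:R) ⊗ₜ a) := by ring
      rw [hdecomp]
      exact add_mem (Ideal.mem_sup_left h1Q) (Ideal.mem_sup_right ha)
    · intro ht
      obtain ⟨a, ha, b, hb, rfl⟩ := Submodule.mem_sup.mp ht
      have h1 : ψ a = 0 := hQker ha
      have h2 : ψ b = 0 := hMTker hb
      rw [map_add, h1, h2, add_zero]
  have hkerP : ∀ t : R ⊗[k] A, ψ t = 0 ↔ t ∈ P ⊔ MT := by
    intro t
    rw [hkerQ, hfiber]
  -- bridge between the fiber ideal and 𝔪 • ⊤ in the quotient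
  have hbridge : ∀ t : R ⊗[k] A,
      Ideal.Quotient.mk P t ∈ (𝔪 • (⊤ : Submodule R ((R ⊗[k] A) ⧸ P))) ↔ t ∈ P ⊔ MT := by
    intro t
    rw [Ideal.smul_top_eq_map, Submodule.restrictScalars_mem]
    have hmapmap : 𝔪.map (algebraMap R ((R ⊗[k] A) ⧸ P)) = MT.map (Ideal.Quotient.mk P) := by
      rw [IsScalarTower.algebraMap_eq R (R ⊗[k] A) ((R ⊗[k] A) ⧸ P), ← Ideal.map_map,
        Ideal.Quotient.algebraMap_eq, hMT]
    rw [hmapmap]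
    constructor
    · intro h
      obtain ⟨m, hm, hmt⟩ := (Ideal.mem_map_iff_of_surjective _
        Ideal.Quotient.mk_surjective).mp h
      have hsub : m - t ∈ P := (Ideal.Quotient.mk_eq_mk_iff_sub_mem m t).mp hmt
      have hdecomp : t = m - (m - t) := by ring
      rw [hdecomp]
      exact sub_mem (Ideal.mem_sup_right hm) (Ideal.mem_sup_left hsub)
    · intro h
      obtain ⟨a, ha, b, hb, rfl⟩ := Submodule.mem_sup.mp h
      rw [map_add, Ideal.Quotient.eq_zero_iff_mem.mpr ha, zero_add]
      exact Ideal.mem_map_of_mem _ hb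
  haveI : IsDomain (A ⧸ p) := Ideal.Quotient.isDomain p
  -- Step 1 : Q ≤ P
  have hQP : Q ≤ P := by
    rw [hQ, Ideal.map_le_iff_le_comap]
    intro x hx
    rw [Ideal.mem_comap]
    show (1:R) ⊗ₜ x ∈ P
    obtain ⟨s, hs, hsx⟩ := exists_annihilator_of_mem_minimalPrimes hp hx
    set u : ((R ⊗[k] A) ⧸ P) →ₗ[R] ((R ⊗[k] A) ⧸ P) :=
      LinearMap.mulLeft R (Ideal.Quotient.mk P ((1:R) ⊗ₜ s)) with hu
    have humk : ∀ t : R ⊗[k] A,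
        u (Ideal.Quotient.mk P t) = Ideal.Quotient.mk P (((1:R) ⊗ₜ s) * t) := by
      intro t
      rw [hu, LinearMap.mulLeft_apply, ← map_mul]
    have hstar : ∀ z : (R ⊗[k] A) ⧸ P,
        u z ∈ 𝔪 • (⊤ : Submodule R ((R ⊗[k] A) ⧸ P)) →
        z ∈ 𝔪 • (⊤ : Submodule R ((R ⊗[k] A) ⧸ P)) := by
      intro z hz
      obtain ⟨t, rfl⟩ := Ideal.Quotient.mk_surjective z
      rw [humk, hbridge] at hz
      rw [hbridge]
      rw [← hkerP] at hz ⊢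
      have hmul : ψ (((1:R) ⊗ₜ s) * t) = ψ ((1:R) ⊗ₜ s) * ψ t := map_mul ψ _ _
      rw [hmul, hψ_right] at hz
      rcases mul_eq_zero.mp hz with h | h
      · exact absurd (Ideal.Quotient.eq_zero_iff_mem.mp h) hs
      · exact h
    have hinj : Function.Injective u := injective_of_injective_mod 𝔪 hnil u hstar
    have h0 : u (Ideal.Quotient.mk P ((1:R) ⊗ₜ x)) = 0 := by
      rw [humk, Algebra.TensorProduct.tmul_mul_tmul, one_mul, hsx]
      simp
    have h1 : u (Ideal.Quotient.mk P ((1:R) ⊗ₜ x)) = u 0 := by rw [h0, map_zero]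
    have h2 := hinj h1
    exact Ideal.Quotient.eq_zero_iff_mem.mp h2
  -- Step 2 : P ≤ Q
  have hPQ : P ≤ Q := by
    set πP : (R ⊗[k] A) →ₗ[R] ((R ⊗[k] A) ⧸ P) := (Ideal.Quotient.mkₐ R P).toLinearMap
      with hπP
    have hπsurj : Function.Surjective πP := Ideal.Quotient.mkₐ_surjective R P
    have hπker : LinearMap.ker πP = P.restrictScalars R := by
      ext t
      rw [LinearMap.mem_ker, Submodule.restrictScalars_mem]
      show Ideal.Quotient.mk P t = 0 ↔ t ∈ P
      exact Ideal.Quotient.eq_zero_iff_mem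
    have hPsub : (P.restrictScalars R : Submodule R (R ⊗[k] A)) ≤
        (Q.restrictScalars R) ⊔ 𝔪 • (⊤ : Submodule R (R ⊗[k] A)) := by
      intro t ht
      rw [Submodule.restrictScalars_mem] at ht
      have h1 : t ∈ Q ⊔ MT := by
        rw [← hfiber]
        exact Ideal.mem_sup_left ht
      obtain ⟨a, ha, b, hb, rfl⟩ := Submodule.mem_sup.mp h1
      refine Submodule.add_mem _ (Submodule.mem_sup_left ?_) (Submodule.mem_sup_right ?_)
      · rwa [Submodule.restrictScalars_mem]
      · rw [Ideal.smul_top_eq_map, Submodule.restrictScalars_mem]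
        rwa [hMT] at hb
    have key : ∀ j : ℕ, (P.restrictScalars R : Submodule R (R ⊗[k] A)) ≤
        (Q.restrictScalars R) ⊔ (𝔪 ^ j • (⊤ : Submodule R (R ⊗[k] A))) := by
      intro j
      induction j with
      | zero =>
        intro t _
        rw [pow_zero, Ideal.one_eq_top]
        apply Submodule.mem_sup_right
        rw [Submodule.top_smul]
        trivial
      | succ j ih =>
        intro t ht
        obtain ⟨a, ha, b, hb, hab⟩ := Submodule.mem_sup.mp (ih ht)
        rw [Submodule.restrictScalars_mem] at ha
        have hbP : b ∈ LinearMap.ker πP := by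
          rw [hπker, Submodule.restrictScalars_mem]
          have htP : t ∈ P := Submodule.restrictScalars_mem R P t |>.mp ht
          have : b = t - a := by rw [← hab]; ring
          rw [this]
          exact sub_mem htP (hQP ha)
        have hb2 : b ∈ (𝔪 ^ j) • (LinearMap.ker πP) :=
          flat_inter_smul πP hπsurj (𝔪 ^ j) hbP hb
        rw [hπker] at hb2
        have hb3 : b ∈ (𝔪 ^ j) • ((Q.restrictScalars R) ⊔ 𝔪 • (⊤ : Submodule R (R ⊗[k] A))) :=
          Submodule.smul_mono le_rfl hPsub hb2
        rw [Submodule.smul_sup] at hb3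
        obtain ⟨b₁, hb₁, b₂, hb₂, hbb⟩ := Submodule.mem_sup.mp hb3
        have hb₁Q : b₁ ∈ Q.restrictScalars R := Submodule.smul_le_right hb₁
        have hb₂m : b₂ ∈ 𝔪 ^ (j + 1) • (⊤ : Submodule R (R ⊗[k] A)) := by
          rwa [pow_succ, ← Ideal.smul_eq_mul, Submodule.smul_assoc]
        rw [← hab, ← hbb]
        exact Submodule.add_mem _
          (Submodule.mem_sup_left (by rwa [Submodule.restrictScalars_mem]))
          (Submodule.add_mem _ (Submodule.mem_sup_left hb₁Q) (Submodule.mem_sup_right hb₂m))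
    obtain ⟨n, hn⟩ := hnil
    intro t ht
    have h1 := key n (by rwa [Submodule.restrictScalars_mem] : t ∈ P.restrictScalars R)
    rw [hn, Ideal.zero_eq_bot, Submodule.bot_smul, sup_bot_eq,
      Submodule.restrictScalars_mem] at h1
    exact h1
  exact le_antisymm hPQ hQP
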